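/- For ρ = |ψ⟩⟨ψ| with |ψ⟩ = (1/√2)(|00⟩+|11⟩)_{12} ⊗ |0⟩_{3…n+1} on (C^2)^{⊗(n+1)}, the operator (I_1 ⊗ Λ^(n)_{2…n+1})(ρ) equals (I/2 − |Ψ+⟩⟨Ψ+|)_{12} ⊗ Λ^(n−1)(|0⟩⟨0|_{3…n+1}), and this operator has a negative eigenvalue; hence I ⊗ Λ^(n) is not positive (Λ^(n) is not completely positive). -/

import Mathlib

open ComplexOrder

/-- `ρ_B`: the partial trace of `ρ` over the systems outside `B`, padded with identity
operators on those systems (so `ρ_∅ = Tr(ρ)·I` and `ρ_{1,…,n} = ρ`). -/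
noncomputable def subsystemPad {n : ℕ} {d : Fin n → ℕ}
    (ρ : Matrix (∀ i, Fin (d i)) (∀ i, Fin (d i)) ℂ) (B : Finset (Fin n)) :
    Matrix (∀ i, Fin (d i)) (∀ i, Fin (d i)) ℂ :=
  Matrix.of fun x y =>
    if ∀ i ∉ B, x i = y i then
      ∑ w : ∀ i, Fin (d i),
        if ∀ i ∈ B, w i = x i then ρ w (fun i => if i ∈ B then y i else w i) else 0
    else 0

/-- The generalised reduction map `Λ⁽ⁿ⁾(ρ) = Σ_{B ⊆ {1,…,n}} (−1)^{|B|} ρ_B`. -/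
noncomputable def genRed {n : ℕ} {d : Fin n → ℕ}
    (ρ : Matrix (∀ i, Fin (d i)) (∀ i, Fin (d i)) ℂ) :
    Matrix (∀ i, Fin (d i)) (∀ i, Fin (d i)) ℂ :=
  ∑ B : Finset (Fin n), ((-1 : ℂ) ^ B.card) • subsystemPad ρ B




lemma ite_inst {α : Sort*} {p : Prop} {i1 i2 : Decidable p} (a b : α) :
    @ite α p i1 a b = @ite α p i2 a b := by cases Subsingleton.elim i1 i2; rfl

lemma fin2_ne (a : Fin 2) (h : a ≠ 0) : a = 1 := by omega

lemma neg_one_pow_sum {ι : Type*} [DecidableEq ι] (S : Finset ι) :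
    ∑ B ∈ S.powerset, (-1:ℂ)^B.card = if S = ∅ then 1 else 0 := by
  have h := Finset.sum_powerset_neg_one_pow_card (x := S)
  calc ∑ B ∈ S.powerset, (-1:ℂ)^B.card
      = ((∑ B ∈ S.powerset, (-1:ℤ)^B.card : ℤ) : ℂ) := by push_cast; rfl
    _ = _ := by rw [h]; split <;> simp

lemma key {ι : Type*} [DecidableEq ι] (S : Finset ι) (x y : ι → Fin 2) :
    ∑ B ∈ S.powerset, ((-1:ℂ)^B.card) *
      (if (∀ i ∈ B, x i = 0 ∧ y i = 0) ∧ (∀ i ∈ S, i ∉ B → x i = y i) then 1 else 0)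
    = if ∀ i ∈ S, x i = 1 ∧ y i = 1 then 1 else 0 := by
  by_cases hxy : ∀ i ∈ S, x i = y i
  · have hcond : ∀ B ∈ S.powerset,
        (((∀ i ∈ B, x i = 0 ∧ y i = 0) ∧ (∀ i ∈ S, i ∉ B → x i = y i)) ↔
          B ⊆ S.filter (fun i => x i = 0)) := by
      intro B hB
      rw [Finset.mem_powerset] at hB
      constructor
      · rintro ⟨h1, -⟩ i hi
        exact Finset.mem_filter.mpr ⟨hB hi, (h1 i hi).1⟩
      · intro h
        refine ⟨fun i hi => ?_, fun i hi _ => hxy i hi⟩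
        have := Finset.mem_filter.mp (h hi)
        exact ⟨this.2, (hxy i (hB hi)) ▸ this.2⟩
    rw [Finset.sum_congr rfl (fun B hB => by rw [if_congr (hcond B hB) rfl rfl])]
    have hTS : S.filter (fun i => x i = 0) ⊆ S := Finset.filter_subset _ _
    have hps : S.powerset.filter (fun B => B ⊆ S.filter (fun i => x i = 0))
        = (S.filter (fun i => x i = 0)).powerset := by
      ext B
      simp only [Finset.mem_filter, Finset.mem_powerset]
      exact ⟨fun h => h.2, fun h => ⟨h.trans hTS, h⟩⟩
    have : ∑ B ∈ S.powerset, (-1:ℂ)^B.card * (if B ⊆ S.filter (fun i => x i = 0) then 1 else 0)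
        = ∑ B ∈ (S.filter (fun i => x i = 0)).powerset, (-1:ℂ)^B.card := by
      simp only [mul_ite, mul_one, mul_zero]
      rw [← Finset.sum_filter, hps]
    rw [this, neg_one_pow_sum]
    have hiff : (S.filter (fun i => x i = 0) = ∅) ↔ (∀ i ∈ S, x i = 1 ∧ y i = 1) := by
      rw [Finset.filter_eq_empty_iff]
      constructor
      · intro h i hi
        have h1 := fin2_ne _ (h hi)
        exact ⟨h1, (hxy i hi) ▸ h1⟩
      · intro h i hi
        simp [(h i hi).1]
    simp only [hiff]
  · push_neg at hxy
    obtain ⟨i, hiS, hne⟩ := hxy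
    rw [Finset.sum_eq_zero, eq_comm, if_neg]
    · intro h
      obtain ⟨h1, h2⟩ := h i hiS
      exact hne (h1.trans h2.symm)
    · intro B hB
      rw [if_neg, mul_zero]
      rintro ⟨h1, h2⟩
      by_cases hiB : i ∈ B
      · obtain ⟨hx, hy⟩ := h1 i hiB
        exact hne (hx.trans hy.symm)
      · exact hne (h2 i hiS hiB)


noncomputable def bpsi (m : ℕ) : (Fin (m+2) → Fin 2) → ℂ := fun x =>
  if x 0 = x 1 ∧ ∀ i : Fin (m + 2), 2 ≤ (i : ℕ) → x i = 0 then ((Real.sqrt 2)⁻¹ : ℂ) else 0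

lemma fin_le2 {k : ℕ} (i : Fin (k+2)) (h0 : i ≠ 0) (h1 : i ≠ 1) : 2 ≤ (i:ℕ) := by
  have h0' : (i:ℕ) ≠ 0 := fun h => h0 (Fin.ext h)
  have h1' : (i:ℕ) ≠ 1 := fun h => h1 (Fin.ext h)
  omega
lemma fin_ne0 {k : ℕ} (i : Fin (k+2)) (h : 2 ≤ (i:ℕ)) : i ≠ 0 := by
  intro he
  have : (i:ℕ) = 0 := congrArg Fin.val he
  omega
lemma fin_ne1 {k : ℕ} (i : Fin (k+2)) (h : 2 ≤ (i:ℕ)) : i ≠ 1 := by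
  intro he
  have : (i:ℕ) = 1 := congrArg Fin.val he
  omega
lemma fin_one_ne_zero {k : ℕ} : (1 : Fin (k+2)) ≠ 0 := by
  intro h
  have : (1:ℕ) = 0 := congrArg Fin.val h
  omega

lemma sqrt_half : ((Real.sqrt 2)⁻¹ : ℂ) * (starRingEnd ℂ) ((Real.sqrt 2)⁻¹ : ℂ) = 1/2 := by
  have : ((Real.sqrt 2)⁻¹ : ℂ) = ((((Real.sqrt 2)⁻¹ : ℝ)) : ℂ) := by push_cast; ring
  rw [this, Complex.conj_ofReal, ← Complex.ofReal_mul]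
  rw [show ((Real.sqrt 2)⁻¹ * (Real.sqrt 2)⁻¹ : ℝ) = (Real.sqrt 2 * Real.sqrt 2)⁻¹ by ring,
    Real.mul_self_sqrt (by norm_num)]
  norm_num

lemma padA (m : ℕ) (B : Finset (Fin (m+2))) (h0 : 0 ∉ B) (h1 : 1 ∉ B)
    (x y : Fin (m+2) → Fin 2) :
    subsystemPad (d := fun _ => 2)
      (Matrix.of fun a b => bpsi m a * (starRingEnd ℂ) (bpsi m b)) (insert 0 B) x y
    = (1/2 : ℂ) * ((if x 0 = y 0 ∧ x 1 = y 1 then 1 else 0) *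
        (if (∀ i ∈ B, x i = 0 ∧ y i = 0) ∧
            (∀ i ∈ (Finset.univ.erase (0 : Fin (m+2))).erase 1, i ∉ B → x i = y i)
          then 1 else 0)) := by
  have h1B : (1 : Fin (m+2)) ∉ insert (0 : Fin (m+2)) B := by
    simp [Finset.mem_insert, fin_one_ne_zero, h1]
  rw [subsystemPad, Matrix.of_apply]
  by_cases hout : ∀ i ∉ insert (0:Fin (m+2)) B, x i = y i
  · rw [if_pos hout]
    set w0 : Fin (m+2) → Fin 2 :=
      fun i => if i = 0 then x 0 else if i = 1 then x 0 else if i ∈ B then x i else 0 with hw0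
    rw [Fintype.sum_eq_single w0 ?side]
    case side =>
      intro w hw
      split
      next h =>
        rw [Matrix.of_apply]
        suffices hz : bpsi m w = 0 by rw [hz, zero_mul]
        rw [bpsi, if_neg]
        rintro ⟨hw01, hwtail⟩
        apply hw
        funext i
        by_cases hi0 : i = 0
        · subst hi0; rw [h 0 (Finset.mem_insert_self 0 B)]; simp [hw0]
        · by_cases hi1 : i = 1
          · subst hi1
            rw [← hw01, h 0 (Finset.mem_insert_self 0 B)]
            simp [hw0, fin_one_ne_zero]
          · by_cases hiB : i ∈ B
            · rw [h i (Finset.mem_insert_of_mem hiB)]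
              simp [hw0, hi0, hi1, hiB]
            · rw [hwtail i (fin_le2 i hi0 hi1)]
              simp [hw0, hi0, hi1, hiB]
      next => rfl
    have hmem : ∀ i ∈ insert (0:Fin (m+2)) B, w0 i = x i := by
      intro i hi
      rcases Finset.mem_insert.mp hi with hi | hi
      · subst hi; simp [hw0]
      · have hi0 : i ≠ 0 := fun h => h0 (h ▸ hi)
        have hi1 : i ≠ 1 := fun h => h1 (h ▸ hi)
        simp [hw0, hi0, hi1, hi]
    rw [if_pos hmem, Matrix.of_apply]
    have hx1 : bpsi m w0 = if (∀ i ∈ B, x i = 0) then ((Real.sqrt 2)⁻¹ : ℂ) else 0 := by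
      rw [bpsi]
      refine if_congr ⟨?_, ?_⟩ rfl rfl
      · rintro ⟨-, h⟩ i hi
        have hi0 : i ≠ 0 := fun hh => h0 (hh ▸ hi)
        have hi1 : i ≠ 1 := fun hh => h1 (hh ▸ hi)
        have := h i (fin_le2 i hi0 hi1)
        simpa [hw0, hi0, hi1, hi] using this
      · intro h
        constructor
        · simp [hw0, fin_one_ne_zero]
        · intro i hi
          have hi0 := fin_ne0 i hi
          have hi1 := fin_ne1 i hi
          by_cases hiB : i ∈ B
          · simpa [hw0, hi0, hi1, hiB] using h i hiB
          · simp [hw0, hi0, hi1, hiB]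
    have hz1 : bpsi m (fun i => if i ∈ insert (0:Fin (m+2)) B then y i else w0 i)
        = if (y 0 = x 0 ∧ ∀ i ∈ B, y i = 0) then ((Real.sqrt 2)⁻¹ : ℂ) else 0 := by
      rw [bpsi]
      refine if_congr ⟨?_, ?_⟩ rfl rfl
      · rintro ⟨hz01, hztail⟩
        constructor
        · simpa [Finset.mem_insert_self, h1B, hw0, fin_one_ne_zero] using hz01
        · intro i hi
          have hi0 : i ≠ 0 := fun hh => h0 (hh ▸ hi)
          have hi1 : i ≠ 1 := fun hh => h1 (hh ▸ hi)
          have := hztail i (fin_le2 i hi0 hi1)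
          simpa [Finset.mem_insert, hi0, hi] using this
      · rintro ⟨hyx, hy⟩
        constructor
        · simpa [Finset.mem_insert_self, h1B, hw0, fin_one_ne_zero] using hyx
        · intro i hi
          have hi0 := fin_ne0 i hi
          have hi1 := fin_ne1 i hi
          by_cases hiB : i ∈ B
          · simpa [Finset.mem_insert, hi0, hiB] using hy i hiB
          · simp [Finset.mem_insert, hi0, hiB, hw0, hi1]
    rw [hx1, hz1, apply_ite (starRingEnd ℂ), map_zero, ite_mul, zero_mul,
      mul_ite, mul_zero, sqrt_half]
    have hx1y1 : x 1 = y 1 := hout 1 h1B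
    have hnotins : ∀ i, i ∈ (Finset.univ.erase (0:Fin (m+2))).erase 1 → i ∉ B →
        i ∉ insert (0:Fin (m+2)) B := by
      intro i hi hiB
      obtain ⟨hi1, hi'⟩ := Finset.mem_erase.mp hi
      obtain ⟨hi0, -⟩ := Finset.mem_erase.mp hi'
      simp [Finset.mem_insert, hi0, hiB]
    have hR : (1/2:ℂ) * ((if x 0 = y 0 ∧ x 1 = y 1 then (1:ℂ) else 0) *
        (if (∀ i ∈ B, x i = 0 ∧ y i = 0) ∧
            (∀ i ∈ (Finset.univ.erase (0 : Fin (m+2))).erase 1, i ∉ B → x i = y i)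
          then (1:ℂ) else 0))
        = if (x 0 = y 0 ∧ x 1 = y 1) ∧ ((∀ i ∈ B, x i = 0 ∧ y i = 0) ∧
            (∀ i ∈ (Finset.univ.erase (0 : Fin (m+2))).erase 1, i ∉ B → x i = y i))
          then (1/2:ℂ) else 0 := by
      split_ifs <;> first | ring1 | tauto
    rw [hR, ← ite_and]
    refine if_congr ⟨?_, ?_⟩ rfl rfl
    · rintro ⟨hx, hyx, hy⟩
      exact ⟨⟨hyx.symm, hx1y1⟩, ⟨fun i hi => ⟨hx i hi, hy i hi⟩,
        fun i hi hiB => hout i (hnotins i hi hiB)⟩⟩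
    · rintro ⟨⟨hxy, -⟩, hK, -⟩
      exact ⟨fun i hi => (hK i hi).1, hxy.symm, fun i hi => (hK i hi).2⟩
  · rw [if_neg hout]
    by_cases hc1 : x 0 = y 0 ∧ x 1 = y 1
    · by_cases hK : (∀ i ∈ B, x i = 0 ∧ y i = 0) ∧
          (∀ i ∈ (Finset.univ.erase (0 : Fin (m+2))).erase 1, i ∉ B → x i = y i)
      · exfalso
        apply hout
        intro i hi
        rw [Finset.mem_insert] at hi
        push_neg at hi
        by_cases hi1 : i = 1
        · subst hi1; exact hc1.2
        · exact hK.2 i (by simp [Finset.mem_erase, hi1, hi.1]) hi.2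
      · rw [if_neg hK]; ring
    · rw [if_neg hc1]; ring

lemma padB (m : ℕ) (B : Finset (Fin (m+2))) (h0 : 0 ∉ B) (h1 : 1 ∉ B)
    (x y : Fin (m+2) → Fin 2) :
    subsystemPad (d := fun _ => 2)
      (Matrix.of fun a b => bpsi m a * (starRingEnd ℂ) (bpsi m b))
      (insert 0 (insert 1 B)) x y
    = (1/2 : ℂ) * ((if x 0 = x 1 ∧ y 0 = y 1 then 1 else 0) *
        (if (∀ i ∈ B, x i = 0 ∧ y i = 0) ∧
            (∀ i ∈ (Finset.univ.erase (0 : Fin (m+2))).erase 1, i ∉ B → x i = y i)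
          then 1 else 0)) := by
  have h0B : (0 : Fin (m+2)) ∈ insert (0:Fin (m+2)) (insert 1 B) := Finset.mem_insert_self _ _
  have h1B : (1 : Fin (m+2)) ∈ insert (0:Fin (m+2)) (insert 1 B) :=
    Finset.mem_insert_of_mem (Finset.mem_insert_self _ _)
  have hmemiff : ∀ i : Fin (m+2), i ∈ insert (0:Fin (m+2)) (insert 1 B) ↔
      (i = 0 ∨ i = 1 ∨ i ∈ B) := by
    intro i; simp [Finset.mem_insert]
  rw [subsystemPad, Matrix.of_apply]
  by_cases hout : ∀ i ∉ insert (0:Fin (m+2)) (insert 1 B), x i = y i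
  · rw [if_pos hout]
    set w0 : Fin (m+2) → Fin 2 :=
      fun i => if i = 0 then x 0 else if i = 1 then x 1 else if i ∈ B then x i else 0 with hw0
    rw [Fintype.sum_eq_single w0 ?side]
    case side =>
      intro w hw
      split
      next h =>
        rw [Matrix.of_apply]
        suffices hz : bpsi m w = 0 by rw [hz, zero_mul]
        rw [bpsi, if_neg]
        rintro ⟨hw01, hwtail⟩
        apply hw
        funext i
        by_cases hi0 : i = 0
        · subst hi0; rw [h 0 h0B]; simp [hw0]
        · by_cases hi1 : i = 1
          · subst hi1; rw [h 1 h1B]; simp [hw0, fin_one_ne_zero]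
          · by_cases hiB : i ∈ B
            · rw [h i ((hmemiff i).mpr (Or.inr (Or.inr hiB)))]
              simp [hw0, hi0, hi1, hiB]
            · rw [hwtail i (fin_le2 i hi0 hi1)]
              simp [hw0, hi0, hi1, hiB]
      next => rfl
    have hmem : ∀ i ∈ insert (0:Fin (m+2)) (insert 1 B), w0 i = x i := by
      intro i hi
      rcases (hmemiff i).mp hi with hi | hi | hi
      · subst hi; simp [hw0]
      · subst hi; simp [hw0, fin_one_ne_zero]
      · have hi0 : i ≠ 0 := fun h => h0 (h ▸ hi)
        have hi1 : i ≠ 1 := fun h => h1 (h ▸ hi)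
        simp [hw0, hi0, hi1, hi]
    rw [if_pos hmem, Matrix.of_apply]
    have hx1 : bpsi m w0 = if (x 0 = x 1 ∧ ∀ i ∈ B, x i = 0) then ((Real.sqrt 2)⁻¹ : ℂ) else 0 := by
      rw [bpsi]
      refine if_congr ⟨?_, ?_⟩ rfl rfl
      · rintro ⟨hw01, h⟩
        constructor
        · simpa [hw0, fin_one_ne_zero] using hw01
        · intro i hi
          have hi0 : i ≠ 0 := fun hh => h0 (hh ▸ hi)
          have hi1 : i ≠ 1 := fun hh => h1 (hh ▸ hi)
          simpa [hw0, hi0, hi1, hi] using h i (fin_le2 i hi0 hi1)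
      · rintro ⟨hx01, h⟩
        constructor
        · simpa [hw0, fin_one_ne_zero] using hx01
        · intro i hi
          have hi0 := fin_ne0 i hi
          have hi1 := fin_ne1 i hi
          by_cases hiB : i ∈ B
          · simpa [hw0, hi0, hi1, hiB] using h i hiB
          · simp [hw0, hi0, hi1, hiB]
    have hz1 : bpsi m (fun i => if i ∈ insert (0:Fin (m+2)) (insert 1 B) then y i else w0 i)
        = if (y 0 = y 1 ∧ ∀ i ∈ B, y i = 0) then ((Real.sqrt 2)⁻¹ : ℂ) else 0 := by
      rw [bpsi]
      refine if_congr ⟨?_, ?_⟩ rfl rfl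
      · rintro ⟨hz01, hztail⟩
        constructor
        · simpa [h0B, h1B] using hz01
        · intro i hi
          have hi0 : i ≠ 0 := fun hh => h0 (hh ▸ hi)
          have hi1 : i ≠ 1 := fun hh => h1 (hh ▸ hi)
          have := hztail i (fin_le2 i hi0 hi1)
          simpa [(hmemiff i).mpr (Or.inr (Or.inr hi))] using this
      · rintro ⟨hy01, hy⟩
        constructor
        · simpa [h0B, h1B] using hy01
        · intro i hi
          have hi0 := fin_ne0 i hi
          have hi1 := fin_ne1 i hi
          by_cases hiB : i ∈ B
          · simpa [(hmemiff i).mpr (Or.inr (Or.inr hiB))] using hy i hiB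
          · have : i ∉ insert (0:Fin (m+2)) (insert 1 B) := by
              rw [hmemiff]; push_neg; exact ⟨hi0, hi1, hiB⟩
            simp [this, hw0, hi0, hi1, hiB]
    rw [hx1, hz1, apply_ite (starRingEnd ℂ), map_zero, ite_mul, zero_mul,
      mul_ite, mul_zero, sqrt_half]
    have hR : (1/2:ℂ) * ((if x 0 = x 1 ∧ y 0 = y 1 then (1:ℂ) else 0) *
        (if (∀ i ∈ B, x i = 0 ∧ y i = 0) ∧
            (∀ i ∈ (Finset.univ.erase (0 : Fin (m+2))).erase 1, i ∉ B → x i = y i)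
          then (1:ℂ) else 0))
        = if (x 0 = x 1 ∧ y 0 = y 1) ∧ ((∀ i ∈ B, x i = 0 ∧ y i = 0) ∧
            (∀ i ∈ (Finset.univ.erase (0 : Fin (m+2))).erase 1, i ∉ B → x i = y i))
          then (1/2:ℂ) else 0 := by
      split_ifs <;> first | ring1 | tauto
    rw [hR, ← ite_and]
    refine if_congr ⟨?_, ?_⟩ rfl rfl
    · rintro ⟨⟨hx01, hx⟩, hy01, hy⟩
      refine ⟨⟨hx01, hy01⟩, fun i hi => ⟨hx i hi, hy i hi⟩, fun i hi hiB => hout i ?_⟩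
      obtain ⟨hi1, hi'⟩ := Finset.mem_erase.mp hi
      obtain ⟨hi0, -⟩ := Finset.mem_erase.mp hi'
      rw [hmemiff]; push_neg; exact ⟨hi0, hi1, hiB⟩
    · rintro ⟨⟨hx01, hy01⟩, hK, -⟩
      exact ⟨⟨hx01, fun i hi => (hK i hi).1⟩, hy01, fun i hi => (hK i hi).2⟩
  · rw [if_neg hout]
    by_cases hc2 : x 0 = x 1 ∧ y 0 = y 1
    · by_cases hK : (∀ i ∈ B, x i = 0 ∧ y i = 0) ∧
          (∀ i ∈ (Finset.univ.erase (0 : Fin (m+2))).erase 1, i ∉ B → x i = y i)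
      · exfalso
        apply hout
        intro i hi
        rw [hmemiff] at hi
        push_neg at hi
        exact hK.2 i (by simp [Finset.mem_erase, hi.2.1, hi.1]) hi.2.2
      · rw [if_neg hK]; ring
    · rw [if_neg hc2]; ring

lemma Mentry (m : ℕ) (x y : Fin (m+2) → Fin 2) :
    ∑ B ∈ ((Finset.univ : Finset (Fin (m+2))).erase 0).powerset,
        ((-1:ℂ)^B.card) * subsystemPad (d := fun _ => 2)
          (Matrix.of fun a b => bpsi m a * (starRingEnd ℂ) (bpsi m b)) (insert 0 B) x y
    = ((1/2:ℂ) * (if x 0 = y 0 ∧ x 1 = y 1 then 1 else 0)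
        - (1/2:ℂ) * (if x 0 = x 1 ∧ y 0 = y 1 then 1 else 0))
      * (if ∀ i ∈ ((Finset.univ : Finset (Fin (m+2))).erase 0).erase 1,
            x i = 1 ∧ y i = 1 then 1 else 0) := by
  have h1E : (1:Fin (m+2)) ∉ ((Finset.univ : Finset (Fin (m+2))).erase 0).erase 1 :=
    Finset.notMem_erase _ _
  have hE : (Finset.univ : Finset (Fin (m+2))).erase 0
      = insert 1 (((Finset.univ : Finset (Fin (m+2))).erase 0).erase 1) :=
    (Finset.insert_erase (Finset.mem_erase.mpr ⟨fin_one_ne_zero, Finset.mem_univ 1⟩)).symm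
  have hmem0 : ∀ B ∈ (((Finset.univ : Finset (Fin (m+2))).erase 0).erase 1).powerset,
      0 ∉ B ∧ 1 ∉ B := by
    intro B hB
    have hB' := Finset.mem_powerset.mp hB
    constructor
    · intro h
      exact (Finset.mem_erase.mp (Finset.mem_erase.mp (hB' h)).2).1 rfl
    · intro h
      exact h1E (hB' h)
  rw [hE, Finset.sum_powerset_insert h1E, Finset.erase_insert h1E]
  have hsum1 : ∑ B ∈ (((Finset.univ : Finset (Fin (m+2))).erase 0).erase 1).powerset,
        ((-1:ℂ)^B.card) * subsystemPad (d := fun _ => 2)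
          (Matrix.of fun a b => bpsi m a * (starRingEnd ℂ) (bpsi m b)) (insert 0 B) x y
      = ((1/2:ℂ) * (if x 0 = y 0 ∧ x 1 = y 1 then 1 else 0)) *
        ∑ B ∈ (((Finset.univ : Finset (Fin (m+2))).erase 0).erase 1).powerset,
          ((-1:ℂ)^B.card) *
            (if (∀ i ∈ B, x i = 0 ∧ y i = 0) ∧
                (∀ i ∈ (Finset.univ.erase (0 : Fin (m+2))).erase 1, i ∉ B → x i = y i)
              then 1 else 0) := by
    rw [Finset.mul_sum]
    refine Finset.sum_congr rfl fun B hB => ?_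
    obtain ⟨h0, h1⟩ := hmem0 B hB
    rw [padA m B h0 h1 x y]
    ring
  have hsum2 : ∑ B ∈ (((Finset.univ : Finset (Fin (m+2))).erase 0).erase 1).powerset,
        ((-1:ℂ)^(insert 1 B).card) * subsystemPad (d := fun _ => 2)
          (Matrix.of fun a b => bpsi m a * (starRingEnd ℂ) (bpsi m b))
          (insert 0 (insert 1 B)) x y
      = (-((1/2:ℂ) * (if x 0 = x 1 ∧ y 0 = y 1 then 1 else 0))) *
        ∑ B ∈ (((Finset.univ : Finset (Fin (m+2))).erase 0).erase 1).powerset,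
          ((-1:ℂ)^B.card) *
            (if (∀ i ∈ B, x i = 0 ∧ y i = 0) ∧
                (∀ i ∈ (Finset.univ.erase (0 : Fin (m+2))).erase 1, i ∉ B → x i = y i)
              then 1 else 0) := by
    rw [Finset.mul_sum]
    refine Finset.sum_congr rfl fun B hB => ?_
    obtain ⟨h0, h1⟩ := hmem0 B hB
    rw [padB m B h0 h1 x y, Finset.card_insert_of_notMem h1, pow_succ]
    ring
  have hkey : ∑ B ∈ (((Finset.univ : Finset (Fin (m+2))).erase 0).erase 1).powerset,
        ((-1:ℂ)^B.card) *
          (if (∀ i ∈ B, x i = 0 ∧ y i = 0) ∧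
              (∀ i ∈ (Finset.univ.erase (0 : Fin (m+2))).erase 1, i ∉ B → x i = y i)
            then 1 else 0)
      = if ∀ i ∈ ((Finset.univ : Finset (Fin (m+2))).erase 0).erase 1,
          x i = 1 ∧ y i = 1 then 1 else 0 := by
    convert key (((Finset.univ : Finset (Fin (m+2))).erase 0).erase 1) x y using 2 with B hB
    exact congrArg _ (ite_inst _ _)
  rw [hsum1, hsum2, hkey]
  ring

lemma pad_rho0 (m : ℕ) (B : Finset (Fin m)) (x y : Fin m → Fin 2) :
    subsystemPad (d := fun _ => 2)
      (Matrix.of fun x y => if (∀ i, x i = 0) ∧ ∀ i, y i = 0 then (1:ℂ) else 0) B x y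
    = if (∀ i ∈ B, x i = 0 ∧ y i = 0) ∧ (∀ i ∉ B, x i = y i) then 1 else 0 := by
  rw [subsystemPad, Matrix.of_apply]
  by_cases hout : ∀ i ∉ B, x i = y i
  · rw [if_pos hout]
    rw [Fintype.sum_eq_single (fun _ : Fin m => (0 : Fin 2)) ?side]
    case side =>
      intro w hw
      split
      · rw [Matrix.of_apply, if_neg]
        rintro ⟨h1, -⟩
        exact hw (funext h1)
      · rfl
    have hZ : (Matrix.of fun x y => if (∀ i, x i = 0) ∧ ∀ i, y i = 0 then (1:ℂ) else 0)
        (fun _ : Fin m => (0:Fin 2)) (fun i => if i ∈ B then y i else (fun _ : Fin m => (0:Fin 2)) i)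
        = if (∀ i ∈ B, y i = 0) then 1 else 0 := by
      rw [Matrix.of_apply]
      refine if_congr ⟨fun h i hi => ?_, fun h => ⟨fun _ => rfl, fun i => ?_⟩⟩ rfl rfl
      · simpa [hi] using h.2 i
      · by_cases hi : i ∈ B
        · simp [hi, h i hi]
        · simp [hi]
    have hC1 : (∀ i ∈ B, (fun _ : Fin m => (0:Fin 2)) i = x i) ↔ (∀ i ∈ B, x i = 0) :=
      ⟨fun h i hi => (h i hi).symm, fun h i hi => (h i hi).symm⟩
    have hC3 : ((∀ i ∈ B, x i = 0 ∧ y i = 0) ∧ ∀ i ∉ B, x i = y i)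
        ↔ ((∀ i ∈ B, x i = 0) ∧ ∀ i ∈ B, y i = 0) :=
      ⟨fun h => ⟨fun i hi => (h.1 i hi).1, fun i hi => (h.1 i hi).2⟩,
       fun h => ⟨fun i hi => ⟨h.1 i hi, h.2 i hi⟩, hout⟩⟩
    rw [if_congr hC1 hZ rfl, if_congr hC3 rfl rfl, ite_and]
  · rw [if_neg hout, eq_comm, if_neg]
    rintro ⟨-, h2⟩
    exact hout h2

lemma genRed_rho0 (m : ℕ) (x y : Fin m → Fin 2) :
    genRed (d := fun _ : Fin m => 2)
      (Matrix.of fun x y => if (∀ i, x i = 0) ∧ ∀ i, y i = 0 then (1:ℂ) else 0) x y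
    = if ∀ i, x i = 1 ∧ y i = 1 then 1 else 0 := by
  rw [genRed, Matrix.sum_apply]
  simp only [Matrix.smul_apply, pad_rho0, smul_eq_mul]
  rw [← Finset.powerset_univ]
  calc ∑ B ∈ Finset.univ.powerset, (-1:ℂ)^B.card *
        (if (∀ i ∈ B, x i = 0 ∧ y i = 0) ∧ (∀ i ∉ B, x i = y i) then 1 else 0)
      = ∑ B ∈ Finset.univ.powerset, (-1:ℂ)^B.card *
        (if (∀ i ∈ B, x i = 0 ∧ y i = 0) ∧ (∀ i ∈ Finset.univ, i ∉ B → x i = y i) then 1 else 0) := by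
        refine Finset.sum_congr rfl fun B _ => ?_
        refine congrArg _ (if_congr (and_congr_right' ?_) rfl rfl)
        exact ⟨fun h i _ hi => h i hi, fun h i hi => h i (Finset.mem_univ i) hi⟩
    _ = if ∀ i ∈ Finset.univ, x i = 1 ∧ y i = 1 then 1 else 0 := by
        convert key Finset.univ x y using 2 with B hB
        exact congrArg _ (ite_inst _ _)
    _ = if ∀ i, x i = 1 ∧ y i = 1 then 1 else 0 := if_congr (by simp) rfl rfl



lemma exists_succsucc {m : ℕ} (i : Fin (m+2)) (h0 : i ≠ 0) (h1 : i ≠ 1) :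
    ∃ j : Fin m, j.succ.succ = i := by
  have h0' : (i:ℕ) ≠ 0 := fun h => h0 (Fin.ext h)
  have h1' : (i:ℕ) ≠ 1 := fun h => h1 (Fin.ext h)
  have hlt := i.isLt
  refine ⟨⟨(i:ℕ) - 2, by omega⟩, ?_⟩
  apply Fin.ext
  simp [Fin.val_succ]
  omega

lemma succsucc_ne0 {m : ℕ} (j : Fin m) : (j.succ.succ : Fin (m+2)) ≠ 0 := by
  intro h
  have : ((j:ℕ) + 1) + 1 = 0 := congrArg Fin.val h
  omega

lemma succsucc_ne1 {m : ℕ} (j : Fin m) : (j.succ.succ : Fin (m+2)) ≠ 1 := by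
  intro h
  have : ((j:ℕ) + 1) + 1 = 1 := congrArg Fin.val h
  omega

/-- For `ρ = |ψ⟩⟨ψ|` with `|ψ⟩ = (1/√2)(|00⟩+|11⟩)₁₂ ⊗ |0⟩_{3…n+1}` on `(ℂ²)^{⊗(n+1)}`
(here `n = m + 1 ≥ 1`, so there are `m + 2` qubits), the operator
`(I₁ ⊗ Λ⁽ⁿ⁾_{2…n+1})(ρ)` equals `(I/2 − |Ψ₊⟩⟨Ψ₊|)₁₂ ⊗ Λ⁽ⁿ⁻¹⁾(|0⟩⟨0|_{3…n+1})`, and it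
has a negative eigenvalue; hence `I ⊗ Λ⁽ⁿ⁾` is not positive, i.e. `Λ⁽ⁿ⁾` is not
completely positive. -/
theorem genRed_not_completely_positive (m : ℕ) :
    let ψ : (Fin (m + 2) → Fin 2) → ℂ := fun x =>
      if x 0 = x 1 ∧ ∀ i : Fin (m + 2), 2 ≤ (i : ℕ) → x i = 0
      then ((Real.sqrt 2)⁻¹ : ℂ) else 0
    let ρ : Matrix (Fin (m + 2) → Fin 2) (Fin (m + 2) → Fin 2) ℂ :=
      Matrix.of fun x y => ψ x * (starRingEnd ℂ) (ψ y)
    -- `(I₁ ⊗ Λ⁽ⁿ⁾_{2…n+1})(ρ) = Σ_{B ⊆ {2,…,n+1}} (−1)^{|B|} ρ_{B ∪ {1}}`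
    let M : Matrix (Fin (m + 2) → Fin 2) (Fin (m + 2) → Fin 2) ℂ :=
      ∑ B ∈ ((Finset.univ : Finset (Fin (m + 2))).erase 0).powerset,
        ((-1 : ℂ) ^ B.card) • subsystemPad (d := fun _ => 2) ρ (insert 0 B)
    -- `Ψ₊` on the first two qubits and `|0…0⟩⟨0…0|` on the remaining `m` qubits
    let ψ₂ : Fin 2 × Fin 2 → ℂ := fun p => if p.1 = p.2 then ((Real.sqrt 2)⁻¹ : ℂ) else 0
    let A : Matrix (Fin 2 × Fin 2) (Fin 2 × Fin 2) ℂ :=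
      (1/2 : ℂ) • (1 : Matrix (Fin 2 × Fin 2) (Fin 2 × Fin 2) ℂ) -
        Matrix.of fun p q => ψ₂ p * (starRingEnd ℂ) (ψ₂ q)
    let ρ₀ : Matrix (Fin m → Fin 2) (Fin m → Fin 2) ℂ :=
      Matrix.of fun x y => if (∀ i, x i = 0) ∧ ∀ i, y i = 0 then 1 else 0
    (M = Matrix.of fun x y =>
        A (x 0, x 1) (y 0, y 1) *
          genRed (d := fun _ : Fin m => 2) ρ₀
            (fun i => x i.succ.succ) (fun i => y i.succ.succ)) ∧
    ∃ (μ : ℝ) (v : (Fin (m + 2) → Fin 2) → ℂ), μ < 0 ∧ v ≠ 0 ∧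
      M.mulVec v = (μ : ℂ) • v := by
  intro ψ ρ M ψ₂ A ρ₀
  have hM0 : M = ∑ B ∈ ((Finset.univ : Finset (Fin (m + 2))).erase 0).powerset,
      ((-1 : ℂ) ^ B.card) • subsystemPad (d := fun _ => 2)
        (Matrix.of fun a b => bpsi m a * (starRingEnd ℂ) (bpsi m b)) (insert 0 B) := rfl
  have hMexp : ∀ x y : Fin (m+2) → Fin 2, M x y =
      ((1/2:ℂ) * (if x 0 = y 0 ∧ x 1 = y 1 then 1 else 0)
        - (1/2:ℂ) * (if x 0 = x 1 ∧ y 0 = y 1 then 1 else 0))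
      * (if ∀ i ∈ ((Finset.univ : Finset (Fin (m+2))).erase 0).erase 1,
            x i = 1 ∧ y i = 1 then 1 else 0) := by
    intro x y
    rw [hM0, Matrix.sum_apply]
    simp only [Matrix.smul_apply, smul_eq_mul]
    exact Mentry m x y
  have hG : ∀ x' y' : Fin m → Fin 2, genRed (d := fun _ : Fin m => 2) ρ₀ x' y'
      = if ∀ i, x' i = 1 ∧ y' i = 1 then 1 else 0 := fun x' y' => genRed_rho0 m x' y'
  have hA : ∀ x y : Fin (m+2) → Fin 2, A (x 0, x 1) (y 0, y 1) =
      (1/2:ℂ) * (if x 0 = y 0 ∧ x 1 = y 1 then 1 else 0)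
        - (1/2:ℂ) * (if x 0 = x 1 ∧ y 0 = y 1 then 1 else 0) := by
    intro x y
    show ((1/2 : ℂ) • (1 : Matrix (Fin 2 × Fin 2) (Fin 2 × Fin 2) ℂ) -
        Matrix.of fun p q => ψ₂ p * (starRingEnd ℂ) (ψ₂ q)) (x 0, x 1) (y 0, y 1) = _
    rw [Matrix.sub_apply, Matrix.smul_apply, Matrix.one_apply, Matrix.of_apply]
    have h1 : ((x 0, x 1) = (y 0, y 1)) ↔ (x 0 = y 0 ∧ x 1 = y 1) := Prod.ext_iff
    have h2 : ψ₂ (x 0, x 1) * (starRingEnd ℂ) (ψ₂ (y 0, y 1))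
        = (1/2:ℂ) * (if x 0 = x 1 ∧ y 0 = y 1 then 1 else 0) := by
      show (if x 0 = x 1 then ((Real.sqrt 2)⁻¹ : ℂ) else 0) *
        (starRingEnd ℂ) (if y 0 = y 1 then ((Real.sqrt 2)⁻¹ : ℂ) else 0) = _
      rw [apply_ite (starRingEnd ℂ), map_zero, ite_mul, zero_mul, mul_ite, mul_zero,
        sqrt_half, ← ite_and]
      split_ifs <;> ring
    rw [h2, if_congr h1 rfl rfl, smul_eq_mul]
  have hpart1 : M = Matrix.of fun x y =>
      A (x 0, x 1) (y 0, y 1) *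
        genRed (d := fun _ : Fin m => 2) ρ₀
          (fun i => x i.succ.succ) (fun i => y i.succ.succ) := by
    ext x y
    rw [hMexp x y, Matrix.of_apply, hA x y, hG]
    refine congrArg _ (if_congr ⟨?_, ?_⟩ rfl rfl)
    · intro h j
      refine h j.succ.succ ?_
      exact Finset.mem_erase.mpr ⟨succsucc_ne1 j,
        Finset.mem_erase.mpr ⟨succsucc_ne0 j, Finset.mem_univ _⟩⟩
    · intro h i hi
      obtain ⟨hi1, hi'⟩ := Finset.mem_erase.mp hi
      obtain ⟨hi0, -⟩ := Finset.mem_erase.mp hi'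
      obtain ⟨j, hj⟩ := exists_succsucc i hi0 hi1
      rw [← hj]
      exact h j
  refine ⟨hpart1, -(1/2 : ℝ),
    (fun x => if x 0 = x 1 ∧ (∀ i ∈ ((Finset.univ : Finset (Fin (m+2))).erase 0).erase 1,
      x i = 1) then (1:ℂ) else 0), by norm_num, ?_, ?_⟩
  · -- v ≠ 0
    intro hv
    have := congrFun hv (fun i => if i = 0 ∨ i = 1 then (0 : Fin 2) else 1)
    rw [if_pos] at this
    · exact one_ne_zero this
    · constructor
      · norm_num
      · intro i hi
        obtain ⟨hi1, hi'⟩ := Finset.mem_erase.mp hi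
        obtain ⟨hi0, -⟩ := Finset.mem_erase.mp hi'
        simp [hi0, hi1]
  · -- eigenvalue equation
    funext x
    have hdot : (M.mulVec (fun x => if x 0 = x 1 ∧
        (∀ i ∈ ((Finset.univ : Finset (Fin (m+2))).erase 0).erase 1, x i = 1)
        then (1:ℂ) else 0)) x
        = ∑ y : Fin (m+2) → Fin 2, M x y * (if y 0 = y 1 ∧
            (∀ i ∈ ((Finset.univ : Finset (Fin (m+2))).erase 0).erase 1, y i = 1)
            then (1:ℂ) else 0) := rfl
    rw [hdot]
    set a : Fin (m+2) → Fin 2 := fun i => if i = 0 ∨ i = 1 then (0 : Fin 2) else 1 with ha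
    set b : Fin (m+2) → Fin 2 := fun _ => 1 with hb
    have ha0 : a 0 = 0 := by simp [ha]
    have ha1 : a 1 = 0 := by simp [ha]
    have haE : ∀ i ∈ ((Finset.univ : Finset (Fin (m+2))).erase 0).erase 1, a i = 1 := by
      intro i hi
      obtain ⟨hi1, hi'⟩ := Finset.mem_erase.mp hi
      obtain ⟨hi0, -⟩ := Finset.mem_erase.mp hi'
      simp [ha, hi0, hi1]
    have hbE : ∀ i, b i = 1 := fun i => rfl
    rw [Fintype.sum_eq_add a b ?hab ?hrest]
    case hab =>
      intro h
      have := congrFun h 0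
      rw [ha0] at this
      exact absurd (congrArg Fin.val (hbE 0 ▸ this)) (by norm_num)
    case hrest =>
      rintro y ⟨hya, hyb⟩
      rw [if_neg, mul_zero]
      rintro ⟨hy01, hyE⟩
      rcases (show y 0 = 0 ∨ y 0 = 1 by omega) with h0 | h0
      · apply hya
        funext i
        by_cases hi0 : i = 0
        · subst hi0; rw [h0, ha0]
        · by_cases hi1 : i = 1
          · subst hi1; rw [← hy01, h0, ha1]
          · rw [hyE i (Finset.mem_erase.mpr ⟨hi1, Finset.mem_erase.mpr ⟨hi0, Finset.mem_univ _⟩⟩),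
              haE i (Finset.mem_erase.mpr ⟨hi1, Finset.mem_erase.mpr ⟨hi0, Finset.mem_univ _⟩⟩)]
      · apply hyb
        funext i
        by_cases hi0 : i = 0
        · subst hi0; rw [h0]
        · by_cases hi1 : i = 1
          · subst hi1; rw [← hy01, h0]
          · rw [hyE i (Finset.mem_erase.mpr ⟨hi1, Finset.mem_erase.mpr ⟨hi0, Finset.mem_univ _⟩⟩)]
    have hva : (if a 0 = a 1 ∧ (∀ i ∈ ((Finset.univ : Finset (Fin (m+2))).erase 0).erase 1,
        a i = 1) then (1:ℂ) else 0) = 1 := if_pos ⟨ha0.trans ha1.symm, haE⟩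
    have hvb : (if b 0 = b 1 ∧ (∀ i ∈ ((Finset.univ : Finset (Fin (m+2))).erase 0).erase 1,
        b i = 1) then (1:ℂ) else 0) = 1 := if_pos ⟨rfl, fun i _ => rfl⟩
    rw [hva, hvb, mul_one, mul_one, hMexp x a, hMexp x b]
    have hTa : (∀ i ∈ ((Finset.univ : Finset (Fin (m+2))).erase 0).erase 1,
        x i = 1 ∧ a i = 1) ↔ (∀ i ∈ ((Finset.univ : Finset (Fin (m+2))).erase 0).erase 1,
        x i = 1) := ⟨fun h i hi => (h i hi).1, fun h i hi => ⟨h i hi, haE i hi⟩⟩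
    have hTb : (∀ i ∈ ((Finset.univ : Finset (Fin (m+2))).erase 0).erase 1,
        x i = 1 ∧ b i = 1) ↔ (∀ i ∈ ((Finset.univ : Finset (Fin (m+2))).erase 0).erase 1,
        x i = 1) := ⟨fun h i hi => (h i hi).1, fun h i hi => ⟨h i hi, rfl⟩⟩
    rw [if_congr hTa rfl rfl, if_congr hTb rfl rfl, ha0, ha1]
    rw [Pi.smul_apply, smul_eq_mul]
    push_cast
    rcases (show x 0 = 0 ∨ x 0 = 1 by omega) with h0 | h0 <;>
      rcases (show x 1 = 0 ∨ x 1 = 1 by omega) with h1 | h1 <;>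
      by_cases hT : ∀ i ∈ ((Finset.univ : Finset (Fin (m+2))).erase 0).erase 1, x i = 1 <;>
      simp [h0, h1, hT, hbE] <;> norm_num
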